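/- Fix d ≥ 2 and real numbers 0 < u < b. Then the integral ∫_{x ≻ 0, u < ‖x‖ ≤ b} n e^{-‖x‖} exp(-n e^{-‖x‖}) dx over the set of x ∈ (0,∞)^d with u < ∑ x_j ≤ b equals ∫_{n e^{-b}}^{n e^{-u}} ((ln n - ln z)^{d-1}/(d-1)!) e^{-z} dz. -/

import Mathlib

open MeasureTheory Real Set ENNReal

lemma lintegral_Ioo_pow_sub (m : ℕ) (y : ℝ) (hy : 0 < y) :
    ∫⁻ t in Ioo 0 y, ENNReal.ofReal ((y - t) ^ m / m.factorial) =
      ENNReal.ofReal (y ^ (m + 1) / (m + 1).factorial) := by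
  rw [← ofReal_integral_eq_lintegral_ofReal]
  · congr 1
    rw [← integral_Ioc_eq_integral_Ioo, ← intervalIntegral.integral_of_le hy.le]
    have : (∫ t in (0:ℝ)..y, (y - t) ^ m / m.factorial)
        = (∫ t in (0:ℝ)..y, (y - t) ^ m) / m.factorial := by
      rw [intervalIntegral.integral_div]
    rw [this, intervalIntegral.integral_comp_sub_left (fun x => x ^ m) y, sub_self, sub_zero,
      integral_pow]
    rw [Nat.factorial_succ]
    push_cast
    rw [div_div]
    ring_nf
  · exact ((Continuous.integrableOn_Icc (by continuity)).mono_set Ioo_subset_Icc_self)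
  · filter_upwards [ae_restrict_mem measurableSet_Ioo] with t ht
    have h1 : (0:ℝ) ≤ y - t := sub_nonneg.2 ht.2.le
    positivity

lemma measurableSet_S (m : ℕ) (v b : ℝ) :
    MeasurableSet {x : Fin m → ℝ | (∀ j, 0 < x j) ∧ v < ∑ j, x j ∧ ∑ j, x j ≤ b} := by
  have hsum : Measurable fun x : Fin m → ℝ => ∑ j, x j :=
    Finset.measurable_sum _ fun j _ => measurable_pi_apply j
  have h1 : MeasurableSet {x : Fin m → ℝ | ∀ j, 0 < x j} := by
    have : {x : Fin m → ℝ | ∀ j, 0 < x j} = ⋂ j, {x | 0 < x j} := by ext x; simp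
    rw [this]
    exact MeasurableSet.iInter fun j => measurableSet_lt measurable_const (measurable_pi_apply j)
  exact h1.inter ((measurableSet_lt measurable_const hsum).inter
    (measurableSet_le hsum measurable_const))

lemma keyA : ∀ (m : ℕ) (f : ℝ → ℝ≥0∞), Measurable f → ∀ (v b : ℝ),
    (∫⁻ x : Fin (m + 1) → ℝ,
      ({x : Fin (m + 1) → ℝ | (∀ j, 0 < x j) ∧ v < ∑ j, x j ∧ ∑ j, x j ≤ b}.indicator
        (fun x => f (∑ j, x j)) x))
    = ∫⁻ y : ℝ, (Ioc v b ∩ Ioi 0).indicator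
        (fun y => ENNReal.ofReal (y ^ m / m.factorial) * f y) y := by
  intro m
  induction m with
  | zero =>
    intro f hf v b
    have hsum : Measurable fun x : Fin (0 + 1) → ℝ => ∑ j, x j :=
      Finset.measurable_sum _ fun j _ => measurable_pi_apply j
    have hm : Measurable fun x : Fin (0 + 1) → ℝ => f (∑ j, x j) := hf.comp hsum
    have key := MeasurePreserving.lintegral_comp (μ := volume) (ν := volume)
      ((volume_preserving_funUnique (Fin 1) ℝ).symm)
      (f := fun x : Fin (0 + 1) → ℝ =>
        ({x : Fin (0 + 1) → ℝ | (∀ j, 0 < x j) ∧ v < ∑ j, x j ∧ ∑ j, x j ≤ b}.indicator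
          (fun x => f (∑ j, x j)) x))
      (hm.indicator (measurableSet_S (0 + 1) v b))
    refine key.symm.trans ?_
    refine lintegral_congr fun y => ?_
    have hy : (∑ j, (MeasurableEquiv.funUnique (Fin 1) ℝ).symm y j) = y := by
      simp [MeasurableEquiv.funUnique]
    simp only [indicator_apply, mem_setOf_eq, hy, mem_inter_iff, mem_Ioc, mem_Ioi]
    by_cases h : v < y ∧ y ≤ b ∧ 0 < y
    · rw [if_pos, if_pos]
      · simp
      · exact ⟨⟨h.1, h.2.1⟩, h.2.2⟩
      · refine ⟨fun j => ?_, h.1, h.2.1⟩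
        simpa [MeasurableEquiv.funUnique] using h.2.2
    · rw [if_neg, if_neg]
      · rintro ⟨⟨h1, h2⟩, h3⟩; exact h ⟨h1, h2, h3⟩
      · rintro ⟨h1, h2, h3⟩
        exact h ⟨h2, h3, by simpa [MeasurableEquiv.funUnique] using h1 0⟩
  | succ m ih =>
    intro f hf v b
    have hsum1 : Measurable fun s : Fin (m + 1) → ℝ => ∑ j, s j :=
      Finset.measurable_sum _ fun j _ => measurable_pi_apply j
    -- the function on the product space
    set T : Set (ℝ × (Fin (m + 1) → ℝ)) :=
      {p | (0 < p.1 ∧ ∀ j, 0 < p.2 j) ∧ v < p.1 + ∑ j, p.2 j ∧ p.1 + ∑ j, p.2 j ≤ b} with hT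
    have hTm : MeasurableSet T := by
      have h1 : MeasurableSet {p : ℝ × (Fin (m + 1) → ℝ) | ∀ j, 0 < p.2 j} := by
        have : {p : ℝ × (Fin (m + 1) → ℝ) | ∀ j, 0 < p.2 j} = ⋂ j, {p | 0 < p.2 j} := by
          ext p; simp
        rw [this]
        exact MeasurableSet.iInter fun j =>
          measurableSet_lt measurable_const (measurable_snd.eval)
      have hps : Measurable fun p : ℝ × (Fin (m + 1) → ℝ) => p.1 + ∑ j, p.2 j :=
        measurable_fst.add (hsum1.comp measurable_snd)
      exact ((measurableSet_lt measurable_const measurable_fst).inter h1).inter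
        ((measurableSet_lt measurable_const hps).inter (measurableSet_le hps measurable_const))
    set H : ℝ × (Fin (m + 1) → ℝ) → ℝ≥0∞ :=
      T.indicator (fun p => f (p.1 + ∑ j, p.2 j)) with hHdef
    have hH : Measurable H :=
      (hf.comp (measurable_fst.add (hsum1.comp measurable_snd))).indicator hTm
    have step1 : (∫⁻ x : Fin (m + 1 + 1) → ℝ,
        ({x : Fin (m + 1 + 1) → ℝ | (∀ j, 0 < x j) ∧ v < ∑ j, x j ∧ ∑ j, x j ≤ b}.indicator
          (fun x => f (∑ j, x j)) x))
        = ∫⁻ p, H p ∂(volume : Measure (ℝ × (Fin (m + 1) → ℝ))) := by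
      rw [← MeasurePreserving.lintegral_comp
        (volume_preserving_piFinSuccAbove (fun _ : Fin (m + 1 + 1) => ℝ) 0) hH]
      refine lintegral_congr fun x => ?_
      have hx : (MeasurableEquiv.piFinSuccAbove (fun _ : Fin (m + 1 + 1) => ℝ) 0) x
          = (x 0, fun j => x j.succ) := by
        simp only [MeasurableEquiv.piFinSuccAbove_apply, Fin.zero_succAbove]
        exact Prod.ext rfl (funext fun j => rfl)
      rw [hx]
      have hsx : (∑ j, x j) = x 0 + ∑ j : Fin (m + 1), x j.succ := Fin.sum_univ_succ x
      simp only [indicator_apply, mem_setOf_eq, hT, hsx]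
      congr 1
      simp only [eq_iff_iff]
      constructor
      · rintro ⟨h1, h2⟩
        exact ⟨⟨h1 0, fun j => h1 j.succ⟩, h2⟩
      · rintro ⟨⟨h0, h1⟩, h2⟩
        refine ⟨fun j => ?_, h2⟩
        rcases Fin.eq_zero_or_eq_succ j with rfl | ⟨k, rfl⟩
        · exact h0
        · exact h1 k
    -- the kernel after integrating out the last m+1 coordinates
    set Ψ : ℝ → ℝ → ℝ≥0∞ := fun t y =>
      {p : ℝ × ℝ | (0 < p.1 ∧ p.1 < p.2) ∧ v < p.2 ∧ p.2 ≤ b}.indicator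
        (fun p => ENNReal.ofReal ((p.2 - p.1) ^ m / m.factorial) * f p.2) (t, y) with hΨdef
    have hΨmeas : Measurable fun p : ℝ × ℝ =>
        {p : ℝ × ℝ | (0 < p.1 ∧ p.1 < p.2) ∧ v < p.2 ∧ p.2 ≤ b}.indicator
          (fun p => ENNReal.ofReal ((p.2 - p.1) ^ m / m.factorial) * f p.2) p := by
      refine Measurable.indicator ?_ ?_
      · exact (ENNReal.measurable_ofReal.comp
          (((measurable_snd.sub measurable_fst).pow_const m).div_const _)).mul
          (hf.comp measurable_snd)
      · exact (((measurableSet_lt measurable_const measurable_fst).inter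
          (measurableSet_lt measurable_fst measurable_snd)).inter
          ((measurableSet_lt measurable_const measurable_snd).inter
            (measurableSet_le measurable_snd measurable_const)))
    have step2 : (∫⁻ p, H p ∂(volume : Measure (ℝ × (Fin (m + 1) → ℝ))))
        = ∫⁻ t, ∫⁻ y, Ψ t y := by
      rw [Measure.volume_eq_prod, lintegral_prod _ hH.aemeasurable]
      refine lintegral_congr fun t => ?_
      by_cases ht : 0 < t
      · -- apply the inductive hypothesis with shifted parameters
        have hft : Measurable fun y => f (t + y) := hf.comp (measurable_const.add measurable_id)
        have hIH := ih (fun y => f (t + y)) hft (v - t) (b - t)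
        have hL : (∫⁻ s : Fin (m + 1) → ℝ, H (t, s))
            = ∫⁻ s : Fin (m + 1) → ℝ,
              ({s : Fin (m + 1) → ℝ | (∀ j, 0 < s j) ∧ v - t < ∑ j, s j ∧ ∑ j, s j ≤ b - t}.indicator
                (fun s => f (t + ∑ j, s j)) s) := by
          refine lintegral_congr fun s => ?_
          simp only [hHdef, indicator_apply, hT, mem_setOf_eq]
          congr 1
          simp only [eq_iff_iff]
          constructor
          · rintro ⟨⟨-, h1⟩, h2, h3⟩
            exact ⟨h1, by linarith, by linarith⟩
          · rintro ⟨h1, h2, h3⟩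
            exact ⟨⟨ht, h1⟩, by linarith, by linarith⟩
        have hR : (∫⁻ y : ℝ, (Ioc (v - t) (b - t) ∩ Ioi 0).indicator
              (fun y => ENNReal.ofReal (y ^ m / m.factorial) * f (t + y)) y)
            = ∫⁻ y, Ψ t y := by
          have := lintegral_add_left_eq_self (μ := (volume : Measure ℝ)) (fun y => Ψ t y) t
          rw [← this]
          refine lintegral_congr fun y => ?_
          simp only [hΨdef, indicator_apply, mem_inter_iff, mem_Ioc, mem_Ioi, mem_setOf_eq]
          have harith : ((v - t < y ∧ y ≤ b - t) ∧ 0 < y)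
              ↔ ((0 < t ∧ t < t + y) ∧ v < t + y ∧ t + y ≤ b) := by
            constructor
            · rintro ⟨⟨h1, h2⟩, h3⟩
              exact ⟨⟨ht, by linarith⟩, by linarith, by linarith⟩
            · rintro ⟨⟨-, h1⟩, h2, h3⟩
              exact ⟨⟨by linarith, by linarith⟩, by linarith⟩
          rw [if_congr harith rfl rfl]
          congr 2
          rw [add_sub_cancel_left]
        rw [hL, hIH, hR]
      · -- t ≤ 0 : both sides vanish
        have hL0 : (∫⁻ s : Fin (m + 1) → ℝ, H (t, s)) = 0 := by
          rw [← lintegral_zero]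
          refine lintegral_congr fun s => ?_
          simp only [hHdef, indicator_apply, hT, mem_setOf_eq]
          rw [if_neg]
          rintro ⟨⟨h1, -⟩, -⟩
          exact ht h1
        have hR0 : (∫⁻ y : ℝ, Ψ t y) = 0 := by
          rw [← lintegral_zero]
          refine lintegral_congr fun y => ?_
          simp only [hΨdef, indicator_apply, mem_setOf_eq]
          rw [if_neg]
          rintro ⟨⟨h1, -⟩, -⟩
          exact ht h1
        rw [hL0, hR0]
    have step3 : (∫⁻ t, ∫⁻ y, Ψ t y) = ∫⁻ y, ∫⁻ t, Ψ t y := by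
      exact lintegral_lintegral_swap hΨmeas.aemeasurable
    have step4 : (∫⁻ y, ∫⁻ t, Ψ t y)
        = ∫⁻ y : ℝ, (Ioc v b ∩ Ioi 0).indicator
            (fun y => ENNReal.ofReal (y ^ (m + 1) / (m + 1).factorial) * f y) y := by
      refine lintegral_congr fun y => ?_
      by_cases hy : (v < y ∧ y ≤ b) ∧ 0 < y
      · have hinner : (∫⁻ t, Ψ t y)
            = ∫⁻ t, (Ioo (0:ℝ) y).indicator
                (fun t => ENNReal.ofReal ((y - t) ^ m / m.factorial) * f y) t := by
          refine lintegral_congr fun t => ?_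
          simp only [hΨdef, indicator_apply, mem_setOf_eq, mem_Ioo]
          refine if_congr ?_ rfl rfl
          constructor
          · rintro ⟨⟨h1, h2⟩, -⟩; exact ⟨h1, h2⟩
          · rintro ⟨h1, h2⟩; exact ⟨⟨h1, h2⟩, hy.1⟩
        have hmeas : Measurable fun t : ℝ => ENNReal.ofReal ((y - t) ^ m / m.factorial) :=
          ENNReal.measurable_ofReal.comp
            (((measurable_const.sub measurable_id).pow_const m).div_const _)
        rw [hinner, lintegral_indicator measurableSet_Ioo,
          lintegral_mul_const _ hmeas, lintegral_Ioo_pow_sub m y hy.2]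
        rw [indicator_apply, if_pos]
        exact ⟨⟨hy.1.1, hy.1.2⟩, hy.2⟩
      · have hinner : (∫⁻ t, Ψ t y) = 0 := by
          rw [← lintegral_zero]
          refine lintegral_congr fun t => ?_
          simp only [hΨdef, indicator_apply, mem_setOf_eq]
          rw [if_neg]
          rintro ⟨⟨h1, h2⟩, h3, h4⟩
          exact hy ⟨⟨h3, h4⟩, lt_trans h1 h2⟩
        rw [hinner, indicator_apply, if_neg]
        rw [mem_inter_iff, mem_Ioc, mem_Ioi]
        exact hy
    rw [step1, step2, step3, step4]


/-- For `d ≥ 2` and `0 < u < b`, the integral of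
`n e^{-‖x‖} exp(-n e^{-‖x‖})` over `{x ∈ (0,∞)^d : u < ‖x‖ ≤ b}` (with `‖x‖ = ∑ x_j`)
equals `∫_{n e^{-b}}^{n e^{-u}} ((ln n - ln z)^{d-1}/(d-1)!) e^{-z} dz`. -/
theorem stmt11 (d : ℕ) (hd : 2 ≤ d) (n : ℝ) (hn : 0 < n) (u b : ℝ)
    (hu : 0 < u) (hub : u < b) :
    (∫ x in {x : Fin d → ℝ | (∀ j, 0 < x j) ∧ u < ∑ j, x j ∧ ∑ j, x j ≤ b},
        n * Real.exp (-∑ j, x j) * Real.exp (-(n * Real.exp (-∑ j, x j)))) =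
      ∫ z in (n * Real.exp (-b))..(n * Real.exp (-u)),
        (Real.log n - Real.log z) ^ (d - 1) / (Nat.factorial (d - 1)) *
          Real.exp (-z) := by
  obtain ⟨m, rfl⟩ : ∃ m, d = m + 1 := ⟨d - 1, (Nat.succ_pred_eq_of_pos (by omega)).symm⟩
  have hm1 : m + 1 - 1 = m := by omega
  rw [hm1]
  set g0 : ℝ → ℝ := fun y => n * Real.exp (-y) * Real.exp (-(n * Real.exp (-y))) with hg0
  have hg0c : Continuous g0 := by fun_prop
  have hg0pos : ∀ y, 0 < g0 y := fun y => by
    simp only [hg0]; positivity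
  set f : ℝ → ℝ≥0∞ := fun y => ENNReal.ofReal (g0 y) with hfdef
  have hf : Measurable f := ENNReal.measurable_ofReal.comp hg0c.measurable
  have hsum : Continuous fun x : Fin (m + 1) → ℝ => ∑ j, x j :=
    continuous_finset_sum _ fun j _ => continuous_apply j
  -- LHS
  have hS := measurableSet_S (m + 1) u b
  have hLHS : (∫ x in {x : Fin (m + 1) → ℝ | (∀ j, 0 < x j) ∧ u < ∑ j, x j ∧ ∑ j, x j ≤ b},
        n * Real.exp (-∑ j, x j) * Real.exp (-(n * Real.exp (-∑ j, x j))))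
      = (∫⁻ y in Ioc u b, ENNReal.ofReal (y ^ m / m.factorial) * f y).toReal := by
    rw [integral_eq_lintegral_of_nonneg_ae]
    · congr 1
      have : (∫⁻ x in {x : Fin (m + 1) → ℝ | (∀ j, 0 < x j) ∧ u < ∑ j, x j ∧ ∑ j, x j ≤ b},
            ENNReal.ofReal (n * Real.exp (-∑ j, x j) * Real.exp (-(n * Real.exp (-∑ j, x j)))))
          = ∫⁻ x : Fin (m + 1) → ℝ,
            ({x : Fin (m + 1) → ℝ | (∀ j, 0 < x j) ∧ u < ∑ j, x j ∧ ∑ j, x j ≤ b}.indicator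
              (fun x => f (∑ j, x j)) x) := by
        rw [lintegral_indicator hS]
      rw [this, keyA m f hf u b]
      have hIoc : Ioc u b ∩ Ioi 0 = Ioc u b :=
        inter_eq_self_of_subset_left fun y hy => hu.trans hy.1
      rw [hIoc, lintegral_indicator measurableSet_Ioc]
    · filter_upwards with x
      positivity
    · exact ((hg0c.comp hsum).aestronglyMeasurable).restrict
  -- substitution on the RHS
  have hderiv : ∀ y ∈ uIcc u b, HasDerivAt (fun y => n * Real.exp (-y)) (-(n * Real.exp (-y))) y := by
    intro y _
    have h1 : HasDerivAt (fun y : ℝ => -y) (-1) y := (hasDerivAt_id y).neg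
    have h2 := (Real.hasDerivAt_exp (-y)).comp y h1
    have h3 := h2.const_mul n
    exact h3.congr_deriv (by ring)
    all_goals (try simp [Function.comp])
    all_goals (try ring)
  have himg : ∀ z ∈ (fun y => n * Real.exp (-y)) '' uIcc u b, z ∈ ({0}ᶜ : Set ℝ) := by
    rintro z ⟨y, -, rfl⟩
    simp only [mem_compl_iff, mem_singleton_iff]
    positivity
  have hgcont : ContinuousOn (fun z => (Real.log n - Real.log z) ^ m / (m.factorial : ℝ) *
      Real.exp (-z)) ((fun y => n * Real.exp (-y)) '' uIcc u b) := by
    refine ContinuousOn.mul ?_ (Continuous.continuousOn (by fun_prop))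
    exact ((continuousOn_const.sub (Real.continuousOn_log.mono himg)).pow m).div_const _
  have hsub := intervalIntegral.integral_comp_smul_deriv' hderiv
    (Continuous.continuousOn (by fun_prop)) hgcont
  have hpt : ∀ y : ℝ, (-(n * Real.exp (-y))) •
      ((fun z => (Real.log n - Real.log z) ^ m / (m.factorial : ℝ) * Real.exp (-z)) ∘
        (fun y => n * Real.exp (-y))) y
      = -(y ^ m / (m.factorial : ℝ) * g0 y) := by
    intro y
    simp only [Function.comp, smul_eq_mul, hg0]
    rw [Real.log_mul hn.ne' (Real.exp_ne_zero _), Real.log_exp]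
    ring_nf
  rw [funext hpt] at hsub
  rw [intervalIntegral.integral_neg] at hsub
  -- hsub : -∫ y in u..b, y^m/m! * g0 y = ∫ z in (n e^{-u})..(n e^{-b}), g z
  have hRHS : (∫ z in (n * Real.exp (-b))..(n * Real.exp (-u)),
        (Real.log n - Real.log z) ^ m / (m.factorial : ℝ) * Real.exp (-z))
      = ∫ y in u..b, y ^ m / (m.factorial : ℝ) * g0 y := by
    rw [intervalIntegral.integral_symm, ← hsub, neg_neg]
  rw [hRHS]
  -- identify the real integral with the lintegral
  rw [hLHS, intervalIntegral.integral_of_le hub.le, integral_eq_lintegral_of_nonneg_ae]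
  · congr 1
    refine setLIntegral_congr_fun measurableSet_Ioc (fun y hy => ?_) |>.symm
    have hy0 : 0 < y := hu.trans hy.1
    rw [ENNReal.ofReal_mul (by positivity)]
  · filter_upwards [ae_restrict_mem measurableSet_Ioc] with y hy
    have hy0 : 0 < y := hu.trans hy.1
    have := (hg0pos y).le
    positivity
  · exact (Continuous.aestronglyMeasurable (by fun_prop)).restrict
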